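/- Completeness of AX↓ for the class M↓ of halting causal simulation models: every L-formula true in every model whose machine has at least one halting execution on every input tape under every intervention is a theorem of AX↓; equivalently, every AX↓-consistent L-formula is satisfied by some model in M↓. -/

import Mathlib

set_option maxHeartbeats 1000000

namespace CausalSim

/-! ### Propositional syntax -/

/-- Propositional formulas over atoms `X_i`. -/
inductive PropForm : Type
  | atom : ℕ → PropForm
  | neg : PropForm → PropForm
  | and : PropForm → PropForm → PropForm
  | or : PropForm → PropForm → PropForm
  deriving DecidableEq

def PropForm.imp (φ ψ : PropForm) : PropForm := .or (.neg φ) ψ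

/-- A fixed propositional contradiction. -/
def PropForm.bot : PropForm := .and (.atom 0) (.neg (.atom 0))

/-- Its negation, a fixed tautology. -/
def PropForm.top : PropForm := PropForm.neg PropForm.bot

def PropForm.eval (v : ℕ → Bool) : PropForm → Bool
  | .atom i => v i
  | .neg φ => !(φ.eval v)
  | .and φ ψ => φ.eval v && ψ.eval v
  | .or φ ψ => φ.eval v || ψ.eval v

/-- `L_int`: ordered conjunctions of literals over distinct atoms, represented by
the list of literals `(index, polarity)`, with strictly increasing indices.
The empty list represents the empty intervention `⊤`. -/
abbrev Lint : Type := {l : List (ℕ × Bool) // l.Chain' fun p q => p.1 < q.1}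

instance : DecidableEq Lint := fun a b =>
  decidable_of_iff (a.1 = b.1) Subtype.ext_iff.symm

def Lint.top : Lint := ⟨[], List.isChain_nil⟩

/-- The partial assignment (intervention) specified by `α ∈ L_int`. -/
def Lint.itv (α : Lint) : ℕ → Option Bool :=
  fun i => (α.1.find? fun p => p.1 == i).map Prod.snd

def PropForm.lit (p : ℕ × Bool) : PropForm :=
  if p.2 then .atom p.1 else .neg (.atom p.1)

/-- `α ∈ L_int` regarded as a propositional formula (conjunction of its literals;
`⊤` for the empty intervention). -/
def Lint.toProp (α : Lint) : PropForm :=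
  match α.1 with
  | [] => PropForm.top
  | p :: rest => rest.foldl (fun acc q => .and acc (.lit q)) (.lit p)

/-! ### The language `L` -/

/-- The causal simulation language `L`: propositional formulas over the atoms
`X ∪ L_cond`, where a conditional `[α]β` has antecedent `α ∈ L_int` and
consequent `β ∈ L_prop`. -/
inductive LForm : Type
  | atom : ℕ → LForm
  | cond : Lint → PropForm → LForm
  | neg : LForm → LForm
  | and : LForm → LForm → LForm
  | or : LForm → LForm → LForm

def LForm.imp (φ ψ : LForm) : LForm := .or (.neg φ) ψ

def LForm.iff (φ ψ : LForm) : LForm := .and (φ.imp ψ) (ψ.imp φ)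

/-- `⟨α⟩β`, an abbreviation for `¬[α]¬β`. -/
def LForm.dia (α : Lint) (β : PropForm) : LForm := .neg (.cond α (.neg β))

/-- The embedding of `L_prop` into `L`. -/
def PropForm.toL : PropForm → LForm
  | .atom i => .atom i
  | .neg φ => .neg φ.toL
  | .and φ ψ => .and φ.toL ψ.toL
  | .or φ ψ => .or φ.toL ψ.toL

/-- Evaluation of an `L`-formula treating the elements of `X ∪ L_cond` as
propositional atoms: `v` assigns values to the `X`-atoms and `w` to the
conditional atoms. -/
def LForm.evalA (v : ℕ → Bool) (w : Lint → PropForm → Bool) : LForm → Bool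
  | .atom i => v i
  | .cond α β => w α β
  | .neg φ => !(φ.evalA v w)
  | .and φ ψ => φ.evalA v w && ψ.evalA v w
  | .or φ ψ => φ.evalA v w || ψ.evalA v w

/-- Substitution instances of propositional tautologies over the atoms `X ∪ L_cond`. -/
def Tautology (φ : LForm) : Prop := ∀ v w, φ.evalA v w = true

/-! ### Turing machines over a Boolean variable tape, and interventions -/

/-- A transition rule `((q, read), (q', write, moveRight))`. -/
abbrev Rule : Type := (ℕ × Bool) × (ℕ × Bool × Bool)

/-- A (possibly non-deterministic) Turing machine, given by its finite list of
transition rules; the initial control state is `0`, and the machine halts in a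
configuration to which no rule applies. -/
abbrev Machine : Type := List Rule

/-- A configuration: control state, head position, and tape contents. -/
structure Cfg where
  q : ℕ
  pos : ℕ
  tape : ℕ → Bool

/-- The initial tape: the intervention `itv` first sets the intervened variables. -/
def initTape (itv : ℕ → Option Bool) (x : ℕ → Bool) : ℕ → Bool :=
  fun i => (itv i).getD (x i)

/-- Writing under an intervention: writes to intervened variables are ignored. -/
def writeTape (itv : ℕ → Option Bool) (t : ℕ → Bool) (pos : ℕ) (b : Bool) : ℕ → Bool :=
  if itv pos = none then Function.update t pos b else t

def movePos (p : ℕ) (right : Bool) : ℕ := if right then p + 1 else p - 1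

/-- One step of the intervened machine `I_itv(T)`. -/
def MStep (T : Machine) (itv : ℕ → Option Bool) (c c' : Cfg) : Prop :=
  ∃ r ∈ T, r.1 = (c.q, c.tape c.pos) ∧
    c' = ⟨r.2.1, movePos c.pos r.2.2.2, writeTape itv c.tape c.pos r.2.2.1⟩

/-- A halted configuration: no rule applies. -/
def Halted (T : Machine) (c : Cfg) : Prop := ∀ r ∈ T, r.1 ≠ (c.q, c.tape c.pos)

/-- The set of result tapes of halting executions of `I_itv(T)` on input `x`. -/
def Outputs (T : Machine) (itv : ℕ → Option Bool) (x : ℕ → Bool) : Set (ℕ → Bool) :=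
  {y | ∃ c : Cfg, Relation.ReflTransGen (MStep T itv) ⟨0, 0, initTape itv x⟩ c ∧
        Halted T c ∧ c.tape = y}

/-- Deterministic machines: at most one rule per (state, read symbol). -/
def Machine.Det (T : Machine) : Prop := ∀ r₁ ∈ T, ∀ r₂ ∈ T, r₁.1 = r₂.1 → r₁ = r₂

/-- State descriptions have finite support. -/
def FinSupp (x : ℕ → Bool) : Prop := {i | x i = true}.Finite

/-- Machines with at least one halting execution on every input tape under
every intervention. -/
def Machine.TotalHalting (T : Machine) : Prop :=
  ∀ (α : Lint) (x : ℕ → Bool), FinSupp x → (Outputs T α.itv x).Nonempty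

/-- Finite state machines: over all inputs and interventions, the machine reads and
writes only boundedly many tape variables. -/
def Machine.FiniteState (T : Machine) : Prop :=
  ∃ B : ℕ, ∀ (α : Lint) (x : ℕ → Bool), FinSupp x →
    ∀ c : Cfg, Relation.ReflTransGen (MStep T α.itv) ⟨0, 0, initTape α.itv x⟩ c → c.pos < B

/-! ### Causal simulation models and satisfaction -/

/-- A causal simulation model: a machine together with a state description with
finite support. -/
structure CSM where
  T : Machine
  x : ℕ → Bool
  fin : FinSupp x

/-- Satisfaction, generically in the map sending each intervention `α ∈ L_int`
to the set of output tapes of the corresponding halting executions. -/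
def SatGen (O : Lint → Set (ℕ → Bool)) (x : ℕ → Bool) : LForm → Prop
  | .atom i => x i = true
  | .cond α β => ∀ y ∈ O α, β.eval y = true
  | .neg φ => ¬ SatGen O x φ
  | .and φ ψ => SatGen O x φ ∧ SatGen O x ψ
  | .or φ ψ => SatGen O x φ ∨ SatGen O x ψ

/-- `(T, x) ⊨ φ`. -/
def CSM.Sat (M : CSM) (φ : LForm) : Prop :=
  SatGen (fun α => Outputs M.T α.itv M.x) M.x φ

/-- The class `M` of all causal simulation models. -/
def inM (_ : CSM) : Prop := True

/-- The class `M_det`. -/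
def inMdet (M : CSM) : Prop := M.T.Det

/-- The class `M↓`. -/
def inMhalt (M : CSM) : Prop := M.T.TotalHalting

/-- The class `M↓_det`. -/
def inMdethalt (M : CSM) : Prop := M.T.Det ∧ M.T.TotalHalting

/-! ### The axiomatic systems -/

/-- Derivability from: propositional tautologies (over atoms `X ∪ L_cond`),
the axioms `R` and `K`, extra axioms `extra`, modus ponens, and the rule `RW`. -/
inductive Deriv (extra : LForm → Prop) : LForm → Prop
  | taut {φ} : Tautology φ → Deriv extra φ
  | extra {φ} : extra φ → Deriv extra φ
  | axR (α : Lint) : Deriv extra (.cond α α.toProp)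
  | axK (α : Lint) (β γ : PropForm) :
      Deriv extra ((LForm.cond α (β.imp γ)).imp ((LForm.cond α β).imp (.cond α γ)))
  | mp {φ ψ} : Deriv extra (φ.imp ψ) → Deriv extra φ → Deriv extra ψ
  | rw (α : Lint) {β β' : PropForm} :
      Deriv extra (β.imp β').toL → Deriv extra ((LForm.cond α β).imp (.cond α β'))

/-- Instances of axiom `F : ⟨α⟩β → [α]β`. -/
def axF (φ : LForm) : Prop :=
  ∃ (α : Lint) (β : PropForm), φ = (LForm.dia α β).imp (.cond α β)

/-- Instances of axiom `D : [α]β → ⟨α⟩β`. -/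
def axD (φ : LForm) : Prop :=
  ∃ (α : Lint) (β : PropForm), φ = (LForm.cond α β).imp (LForm.dia α β)

def AX : LForm → Prop := Deriv fun _ => False
def AXdet : LForm → Prop := Deriv axF
def AXhalt : LForm → Prop := Deriv axD
def AXdethalt : LForm → Prop := Deriv fun φ => axF φ ∨ axD φ

end CausalSim
namespace CausalSim

/-! ### Normal form clauses and selection functions -/

def bigAndL : List LForm → LForm
  | [] => PropForm.top.toL
  | φ :: rest => rest.foldl .and φ

def bigOrL : List LForm → LForm
  | [] => PropForm.bot.toL
  | φ :: rest => rest.foldl .or φ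

def bigOrP : List PropForm → PropForm
  | [] => PropForm.bot
  | φ :: rest => rest.foldl .or φ

/-- The data of a conjunctive clause
`π ∧ ⋀_{i∈I}([α_i] ⋁_{j∈J_i} β_{i,j}) ∧ ⋀_{k∈K} ⟨α_k⟩ β_k`. -/
structure Clause where
  pi : PropForm
  boxes : List (Lint × List Lint)
  dias : List (Lint × Lint)

/-- The `α_i` (for distinct `i ∈ I`) are pairwise distinct. -/
def Clause.wf (δ : Clause) : Prop := (δ.boxes.map Prod.fst).Pairwise (· ≠ ·)

def Clause.toLForm (δ : Clause) : LForm :=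
  .and δ.pi.toL (.and
    (bigAndL (δ.boxes.map fun p => .cond p.1 (bigOrP (p.2.map Lint.toProp))))
    (bigAndL (δ.dias.map fun p => LForm.dia p.1 p.2.toProp)))

/-- `S_δ`: the antecedents occurring in the clause `δ`. -/
def Clause.ants (δ : Clause) : List Lint := δ.boxes.map Prod.fst ++ δ.dias.map Prod.fst

/-- A list of literals is propositionally consistent. -/
def LitsConsistent (l : List (ℕ × Bool)) : Prop :=
  ∀ i, ¬((i, true) ∈ l ∧ (i, false) ∈ l)

/-- `γ` is the `L_int`-equivalent of the conjunction of the literals `l`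
(reordering and deletion of repeated literals). -/
def Lint.IsEquivOf (γ : Lint) (l : List (ℕ × Bool)) : Prop := γ.1.toFinset = l.toFinset

/-- `f` is a selection function for the clause `δ`. -/
def IsSelection (δ : Clause) (f : Lint → List Lint) : Prop :=
  (∀ α ∈ δ.ants, α ∉ δ.dias.map Prod.fst → f α = []) ∧
  (∀ α ∈ δ.dias.map Prod.fst, ∃ sel : Lint × Lint → Lint,
    f α = (δ.dias.filter fun p => decide (p.1 = α)).map sel ∧
    ∀ p ∈ δ.dias, p.1 = α →
      (∀ J, (α, J) ∈ δ.boxes →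
        ∃ j ∈ J, LitsConsistent (α.1 ++ p.2.1 ++ j.1) ∧
          (sel p).IsEquivOf (α.1 ++ p.2.1 ++ j.1)) ∧
      (α ∉ δ.boxes.map Prod.fst →
        LitsConsistent (α.1 ++ p.2.1) ∧ (sel p).IsEquivOf (α.1 ++ p.2.1)))

/-! ### Sizes -/

def PropForm.size : PropForm → ℕ
  | .atom i => i + 1
  | .neg φ => φ.size + 1
  | .and φ ψ => φ.size + ψ.size + 1
  | .or φ ψ => φ.size + ψ.size + 1

def Lint.size (α : Lint) : ℕ := (α.1.map fun p => p.1 + 1).sum + 1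

/-- `|φ|`, the number of symbols of `φ` (an occurrence of the atom `X_i`
contributing `i + 1` symbols). -/
def LForm.size : LForm → ℕ
  | .atom i => i + 1
  | .cond α β => α.size + β.size + 1
  | .neg φ => φ.size + 1
  | .and φ ψ => φ.size + ψ.size + 1
  | .or φ ψ => φ.size + ψ.size + 1

def PropForm.maxAtom : PropForm → ℕ
  | .atom i => i
  | .neg φ => φ.maxAtom
  | .and φ ψ => max φ.maxAtom ψ.maxAtom
  | .or φ ψ => max φ.maxAtom ψ.maxAtom

def Lint.maxAtom (α : Lint) : ℕ := (α.1.map Prod.fst).foldr max 0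

/-- `N`: the largest index of an atom occurring in `φ`. -/
def LForm.maxAtom : LForm → ℕ
  | .atom i => i
  | .cond α β => max α.maxAtom β.maxAtom
  | .neg φ => φ.maxAtom
  | .and φ ψ => max φ.maxAtom ψ.maxAtom
  | .or φ ψ => max φ.maxAtom ψ.maxAtom

/-- `S_φ`: the antecedents of the conditionals occurring in `φ`. -/
def LForm.ants : LForm → List Lint
  | .atom _ => []
  | .cond α _ => [α]
  | .neg φ => φ.ants
  | .and φ ψ => φ.ants ++ ψ.ants
  | .or φ ψ => φ.ants ++ ψ.ants

/-! ### The programming language `PL` -/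

/-- Assignment statements `X_i := c`, `X_i := X_j`, `X_i := !X_j`. -/
inductive BAssign : Type
  | const (i : ℕ) (c : Bool)
  | copy (i j : ℕ)
  | negcopy (i j : ℕ)
  deriving DecidableEq

def BAssign.target : BAssign → ℕ
  | .const i _ => i
  | .copy i _ => i
  | .negcopy i _ => i

def BAssign.maxVar : BAssign → ℕ
  | .const i _ => i
  | .copy i j => max i j
  | .negcopy i j => max i j

/-- Tests `X_i = c`, `X_i = X_j`, `X_i != X_j`, and conjunctions thereof. -/
inductive BTest : Type
  | eqc (i : ℕ) (c : Bool)
  | eqv (i j : ℕ)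
  | nev (i j : ℕ)
  | and (t₁ t₂ : BTest)
  deriving DecidableEq

def BTest.eval (s : ℕ → Bool) : BTest → Bool
  | .eqc i c => s i == c
  | .eqv i j => s i == s j
  | .nev i j => !(s i == s j)
  | .and t₁ t₂ => t₁.eval s && t₂.eval s

def BTest.size : BTest → ℕ
  | .eqc _ _ => 1
  | .eqv _ _ => 1
  | .nev _ _ => 1
  | .and t₁ t₂ => t₁.size + t₂.size + 1

/-- Programs of `PL`: the empty program, assignments, sequencing,
if-then-else, nondeterministic choice, and the unconditional infinite loop. -/
inductive Prog : Type
  | empty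
  | assign (a : BAssign)
  | seq (p q : Prog)
  | ite (c : BTest) (p q : Prog)
  | choose (ps : List Prog)
  | loop

mutual
  /-- The length of a program. -/
  def Prog.size : Prog → ℕ
    | .empty => 1
    | .assign _ => 1
    | .seq p q => p.size + q.size + 1
    | .ite c p q => c.size + p.size + q.size + 1
    | .choose ps => Prog.sizeList ps + 1
    | .loop => 1
  def Prog.sizeList : List Prog → ℕ
    | [] => 0
    | p :: ps => p.size + Prog.sizeList ps
end

/-- The effect of an assignment under an intervention: writes to intervened
variables are ignored. -/
def applyAssign (itv : ℕ → Option Bool) (a : BAssign) (s : ℕ → Bool) : ℕ → Bool :=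
  let v : Bool := match a with
    | .const _ c => c
    | .copy _ j => s j
    | .negcopy _ j => !(s j)
  if itv a.target = none then Function.update s a.target v else s

/-- Big-step semantics of `PL` under an intervention. A `loop`-statement has no
halting execution, and a `choose`-statement executes one of its branches. -/
inductive BigStep (itv : ℕ → Option Bool) : Prog → (ℕ → Bool) → (ℕ → Bool) → Prop
  | empty (s) : BigStep itv .empty s s
  | assign (a s) : BigStep itv (.assign a) s (applyAssign itv a s)
  | seq {p q s t u} : BigStep itv p s t → BigStep itv q t u → BigStep itv (.seq p q) s u
  | iteT {c p q s t} : c.eval s = true → BigStep itv p s t → BigStep itv (.ite c p q) s t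
  | iteF {c p q s t} : c.eval s = false → BigStep itv q s t → BigStep itv (.ite c p q) s t
  | choose {ps p s t} : p ∈ ps → BigStep itv p s t → BigStep itv (.choose ps) s t

/-- The set of result tapes of halting executions of the intervened program. -/
def ProgOutputs (P : Prog) (itv : ℕ → Option Bool) (x : ℕ → Bool) : Set (ℕ → Bool) :=
  {y | BigStep itv P (initTape itv x) y}

/-- Satisfaction `(T_P, x) ⊨ φ` for the machine compiled from the program `P`
(whose executions are those of `P`). -/
def ProgSat (P : Prog) (x : ℕ → Bool) (φ : LForm) : Prop :=
  SatGen (fun α => ProgOutputs P α.itv x) x φ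

end CausalSim
namespace CausalSim

/-! ### The canonical program fragment `PL†_{φ,C}` -/

def seqList : List Prog → Prog
  | [] => .empty
  | p :: ps => .seq p (seqList ps)

/-- Listing 1: `IsIntervened(X_i)` (with offset parameter `N`): performs the
toggle check for `X_i`, records the result in `X_{i+N}`, uses `X_{i+2N}` as a
temporary variable, and leaves `X_i` unchanged. -/
def isIntervened (N i : ℕ) : Prog :=
  seqList [
    .assign (.copy (i + N) i),
    .assign (.negcopy i i),
    .assign (.copy (i + 2 * N) i),
    .ite (.eqv (i + 2 * N) (i + N))
      (.assign (.const (i + N) true)) (.assign (.const (i + N) false)),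
    .assign (.negcopy i i)]

/-- One copy of `IsIntervened(X_i)` for each `1 ≤ i ≤ N`. -/
def isIntervenedAll (N : ℕ) : Prog :=
  seqList ((List.range' 1 N).map (isIntervened N))

/-- Listing 2: `HoldsFromIntervention(α)`: the condition checking that exactly
the variables occurring in `α` are marked as intervened and carry the values
specified by `α`'s literals. -/
def holdsFromItv (N : ℕ) (α : Lint) : BTest :=
  ((List.range' 1 N).map fun i =>
    match α.itv i with
    | some b => BTest.and (.eqc i b) (.eqc (i + N) true)
    | none => BTest.eqc (i + N) false).foldr .and (.eqv 0 0)

/-- A sequence of assignment statements. -/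
def assignSeq (l : List BAssign) : Prog := seqList (l.map Prog.assign)

/-- An admissible assignment sequence: assignments only to (pairwise distinct)
variables `X_i` with `1 ≤ i ≤ N`, mentioning only variables of index `≤ N`. -/
def GoodAssigns (N : ℕ) (l : List BAssign) : Prop :=
  (l.map BAssign.target).Nodup ∧ ∀ a ∈ l, a.maxVar ≤ N ∧ 1 ≤ a.target

/-- The admissible bodies of the `if`-statements of a fragment program:
(a) a `choose`-statement with at most `C·|φ|` branches, each an admissible
assignment sequence; (b) a single admissible assignment sequence; or
(c) a single `loop`-statement — with (a) excluded for the deterministic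
dialects and (c) excluded for the halting dialects. -/
def IfBody (C N sz : ℕ) (allowChoose allowLoop : Bool) (p : Prog) : Prop :=
  (allowChoose = true ∧ ∃ branches : List (List BAssign),
      p = .choose (branches.map assignSeq) ∧ branches.length ≤ C * sz ∧
      ∀ l ∈ branches, GoodAssigns N l) ∨
  (∃ l : List BAssign, p = assignSeq l ∧ GoodAssigns N l) ∨
  (allowLoop = true ∧ p = .loop)

/-- Membership in the fragment `PL†_{φ,C}`: one copy of `IsIntervened(X_i)` for
each `1 ≤ i ≤ N`, followed by at most one `if`-statement with condition
`HoldsFromIntervention(α)` for each antecedent `α` occurring in `φ`, with an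
admissible body. -/
def InFrag (C : ℕ) (φ : LForm) (allowChoose allowLoop : Bool) (P : Prog) : Prop :=
  ∃ ifs : List (Lint × Prog),
    (ifs.map Prod.fst).Nodup ∧
    (∀ q ∈ ifs, q.1 ∈ φ.ants ∧ IfBody C φ.maxAtom φ.size allowChoose allowLoop q.2) ∧
    P = .seq (isIntervenedAll φ.maxAtom)
      (seqList (ifs.map fun q => Prog.ite (holdsFromItv φ.maxAtom q.1) q.2 .empty))

/-! ### Encodings into binary strings -/

def encNat (n : ℕ) : List Bool := List.replicate n true ++ [false]

def encListGen (enc : α → List Bool) (l : List α) : List Bool :=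
  encNat l.length ++ l.flatMap enc

def encLit (p : ℕ × Bool) : List Bool := encNat p.1 ++ [p.2]

def encLint (α : Lint) : List Bool := encListGen encLit α.1

def encProp : PropForm → List Bool
  | .atom i => encNat 0 ++ encNat i
  | .neg φ => encNat 1 ++ encProp φ
  | .and φ ψ => encNat 2 ++ encProp φ ++ encProp ψ
  | .or φ ψ => encNat 3 ++ encProp φ ++ encProp ψ

/-- A standard encoding of `L`-formulas as binary strings. -/
def encLForm : LForm → List Bool
  | .atom i => encNat 0 ++ encNat i
  | .cond α β => encNat 1 ++ encLint α ++ encProp β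
  | .neg φ => encNat 2 ++ encLForm φ
  | .and φ ψ => encNat 3 ++ encLForm φ ++ encLForm ψ
  | .or φ ψ => encNat 4 ++ encLForm φ ++ encLForm ψ

def encAssign : BAssign → List Bool
  | .const i c => encNat 0 ++ encNat i ++ [c]
  | .copy i j => encNat 1 ++ encNat i ++ encNat j
  | .negcopy i j => encNat 2 ++ encNat i ++ encNat j

def encTest : BTest → List Bool
  | .eqc i c => encNat 0 ++ encNat i ++ [c]
  | .eqv i j => encNat 1 ++ encNat i ++ encNat j
  | .nev i j => encNat 2 ++ encNat i ++ encNat j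
  | .and t₁ t₂ => encNat 3 ++ encTest t₁ ++ encTest t₂

mutual
  /-- A standard encoding of programs as binary strings. -/
  def encProg : Prog → List Bool
    | .empty => encNat 0
    | .assign a => encNat 1 ++ encAssign a
    | .seq p q => encNat 2 ++ encProg p ++ encProg q
    | .ite c p q => encNat 3 ++ encTest c ++ encProg p ++ encProg q
    | .choose ps => encNat 4 ++ encNat ps.length ++ encProgList ps
    | .loop => encNat 5
  def encProgList : List Prog → List Bool
    | [] => []
    | p :: ps => encProg p ++ encProgList ps
end

/-! ### Polynomial time, NP, and NP-completeness -/

/-- The identity finite encoding of binary strings. -/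
def listBoolFinEncoding : Computability.Encoding (List Bool) Bool where
  encode := id
  decode := fun l => some l
  decode_encode := fun _ => rfl

/-- `f` is computable in polynomial time (by a Turing machine). -/
def PolyTimeFun (f : List Bool → List Bool) : Prop :=
  Nonempty (Turing.TM2ComputableInPolyTime listBoolFinEncoding.encode listBoolFinEncoding.encode f)

/-- Polynomial-time many-one reducibility. -/
def PolyReducible (L₁ L₂ : List Bool → Prop) : Prop :=
  ∃ f : List Bool → List Bool, PolyTimeFun f ∧ ∀ s, L₁ s ↔ L₂ (f s)

/-- A self-delimiting pairing of binary strings. -/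
def encPairStr (a b : List Bool) : List Bool := encNat a.length ++ a ++ b

/-- The class NP, via polynomial-time verifiers of polynomial-length certificates. -/
def InNP (L : List Bool → Prop) : Prop :=
  ∃ (V : List Bool → Bool) (p : Polynomial ℕ),
    PolyTimeFun (fun s => [V s]) ∧
    ∀ s, L s ↔ ∃ w : List Bool, w.length ≤ p.eval s.length ∧ V (encPairStr s w) = true

/-- NP-completeness with respect to polynomial-time many-one reductions. -/
def NPComplete (L : List Bool → Prop) : Prop :=
  InNP L ∧ ∀ L' : List Bool → Prop, InNP L' → PolyReducible L' L

/-- The language Sim-Sat for a class of models: encodings of `L`-formulas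
satisfied by some model in the class. -/
def SimSatLang (cls : CSM → Prop) : List Bool → Prop :=
  fun s => ∃ φ : LForm, s = encLForm φ ∧ ∃ M : CSM, cls M ∧ M.Sat φ

/-! ### Miscellaneous helpers -/

/-- The state description with support the list `xs`. -/
def stateOf (xs : List ℕ) : ℕ → Bool := fun i => decide (i ∈ xs)

theorem finSupp_stateOf (xs : List ℕ) : FinSupp (stateOf xs) := by
  apply Set.Finite.subset (List.finite_toSet xs)
  intro i hi
  simpa [stateOf] using hi

/-- The model given by a machine and (the support of) a state description. -/
def csmOf (T : Machine) (xs : List ℕ) : CSM := ⟨T, stateOf xs, finSupp_stateOf xs⟩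

/-- The singleton intervention `X_n := 1`. -/
def lintSingle (n : ℕ) : Lint := ⟨[(n, true)], List.isChain_singleton _⟩

/-- The set `Ω` of the non-compactness proposition, for `f : ℕ → ℕ`. -/
def Omega (f : ℕ → ℕ) : Set LForm :=
  {ψ | ∃ n, ψ = LForm.neg (.atom n)} ∪
  {ψ | ∃ n, ψ = LForm.dia (lintSingle n) (.atom (f n))} ∪
  {ψ | ∃ n m, m ≠ n ∧ m ≠ f n ∧ ψ = LForm.cond (lintSingle n) (.neg (.atom m))}

end CausalSim
namespace CausalSim

/-! ### Part A: propositional evaluation lemmas and the derivability toolkit -/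

section Toolkit

lemma evalA_imp (φ ψ : LForm) (v w) :
    (φ.imp ψ).evalA v w = (!(φ.evalA v w) || ψ.evalA v w) := rfl

lemma evalA_toL (φ : PropForm) (v w) : (φ.toL).evalA v w = φ.eval v := by
  induction φ <;> simp [PropForm.toL, LForm.evalA, PropForm.eval, *]

lemma eval_bot (v) : PropForm.bot.eval v = false := by
  simp [PropForm.bot, PropForm.eval]

lemma taut_of_propTaut {β β' : PropForm} (h : ∀ v, (β.imp β').eval v = true) :
    Tautology ((β.imp β').toL) := by
  intro v w; rw [evalA_toL]; exact h v

-- derived rule: RW from a semantic propositional implication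
lemma deriv_rw {extra} (α : Lint) {β β' : PropForm}
    (h : ∀ v, β.eval v = true → β'.eval v = true) :
    Deriv extra ((LForm.cond α β).imp (.cond α β')) := by
  apply Deriv.rw
  apply Deriv.taut
  apply taut_of_propTaut
  intro v
  simp only [PropForm.imp, PropForm.eval, Bool.or_eq_true, Bool.not_eq_true']
  rcases hb : β.eval v with _ | _
  · exact Or.inl rfl
  · exact Or.inr (h v hb)

lemma taut_mono (A B C : LForm) :
    Tautology ((A.imp B).imp ((C.imp A).imp (C.imp B))) := by
  intro v w
  simp only [LForm.imp, LForm.evalA]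
  cases (A.evalA v w) <;> cases (B.evalA v w) <;> cases (C.evalA v w) <;> rfl

lemma taut_swap (A B C : LForm) :
    Tautology ((A.imp (B.imp C)).imp (B.imp (A.imp C))) := by
  intro v w
  simp only [LForm.imp, LForm.evalA]
  cases (A.evalA v w) <;> cases (B.evalA v w) <;> cases (C.evalA v w) <;> rfl

lemma taut_trans (A B C : LForm) :
    Tautology ((A.imp B).imp ((B.imp C).imp (A.imp C))) := by
  intro v w
  simp only [LForm.imp, LForm.evalA]
  cases (A.evalA v w) <;> cases (B.evalA v w) <;> cases (C.evalA v w) <;> rfl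

lemma taut_pull (X P Z C : LForm) :
    Tautology ((X.imp (P.imp Z)).imp ((C.imp X).imp (P.imp (C.imp Z)))) := by
  intro v w
  simp only [LForm.imp, LForm.evalA]
  cases (X.evalA v w) <;> cases (P.evalA v w) <;> cases (Z.evalA v w) <;>
    cases (C.evalA v w) <;> rfl

lemma taut_id (A : LForm) : Tautology (A.imp A) := by
  intro v w
  simp only [LForm.imp, LForm.evalA]
  cases (A.evalA v w) <;> rfl

lemma taut_contr (A B : LForm) :
    Tautology ((A.imp B).imp ((A.imp (.neg B)).imp (A.imp PropForm.bot.toL))) := by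
  intro v w
  have hb : (PropForm.bot.toL).evalA v w = false := by rw [evalA_toL, eval_bot]
  simp only [LForm.imp, LForm.evalA, hb]
  cases (A.evalA v w) <;> cases (B.evalA v w) <;> rfl

lemma deriv_trans {extra} {A B C : LForm}
    (h1 : Deriv extra (A.imp B)) (h2 : Deriv extra (B.imp C)) :
    Deriv extra (A.imp C) :=
  Deriv.mp (Deriv.mp (Deriv.taut (taut_trans A B C)) h1) h2

lemma deriv_swap {extra} {A B C : LForm}
    (h : Deriv extra (A.imp (B.imp C))) : Deriv extra (B.imp (A.imp C)) :=
  Deriv.mp (Deriv.taut (taut_swap A B C)) h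

/-- `chainC α S t` is `[α]s₁ → ([α]s₂ → (⋯ → t))`. -/
def chainC (α : Lint) (S : List PropForm) (t : LForm) : LForm :=
  (S.map (LForm.cond α)).foldr .imp t

lemma chainC_nil (α t) : chainC α [] t = t := rfl

lemma chainC_cons (α β S t) :
    chainC α (β :: S) t = (LForm.cond α β).imp (chainC α S t) := rfl

lemma deriv_chain_mono {extra} (α : Lint) (S : List PropForm) {A B : LForm}
    (h : Deriv extra (A.imp B)) :
    Deriv extra ((chainC α S A).imp (chainC α S B)) := by
  induction S with
  | nil => exact h
  | cons β S ih =>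
      rw [chainC_cons, chainC_cons]
      exact Deriv.mp (Deriv.taut (taut_mono (chainC α S A) (chainC α S B)
        (LForm.cond α β))) ih

lemma deriv_chain_pull {extra} (α : Lint) (S : List PropForm) (P Z : LForm) :
    Deriv extra ((chainC α S (P.imp Z)).imp (P.imp (chainC α S Z))) := by
  induction S with
  | nil => exact Deriv.taut (taut_id (P.imp Z))
  | cons β S ih =>
      rw [chainC_cons, chainC_cons]
      exact Deriv.mp (Deriv.taut (taut_pull (chainC α S (P.imp Z)) P (chainC α S Z)
        (LForm.cond α β))) ih

/-- the key conjunction-collection derivation: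
`[α]s₁ → ⋯ → [α]sₙ → [α](s₁ ∧ (s₂ ∧ ⋯ ∧ α))`. -/
lemma deriv_chain_collect {extra} (α : Lint) (S : List PropForm) :
    Deriv extra (chainC α S (.cond α (S.foldr .and α.toProp))) := by
  induction S with
  | nil => exact Deriv.axR α
  | cons β S ih =>
      rw [chainC_cons]
      set F := S.foldr PropForm.and α.toProp with hF
      -- [α]F → ([α]β → [α](β ∧ F))
      have h1 : Deriv extra ((LForm.cond α β).imp
          ((LForm.cond α F).imp (.cond α (.and β F)))) := by
        have hrw : Deriv extra ((LForm.cond α β).imp (.cond α (F.imp (.and β F)))) := by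
          apply deriv_rw
          intro v hv
          simp only [PropForm.imp, PropForm.eval, Bool.or_eq_true, Bool.not_eq_true']
          rcases hf : F.eval v with _ | _
          · exact Or.inl rfl
          · exact Or.inr (by simp [hv, hf])
        exact deriv_trans hrw (Deriv.axK α F (.and β F))
      -- swap: [α]F → ([α]β → [α](β ∧ F))
      have h2 := deriv_swap h1
      -- mono through the chain, applied to ih
      have h3 : Deriv extra (chainC α S ((LForm.cond α β).imp (.cond α (.and β F)))) :=
        Deriv.mp (deriv_chain_mono α S h2) ih
      have h4 := deriv_chain_pull (extra := extra) α S (LForm.cond α β)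
        (.cond α (.and β F))
      exact Deriv.mp h4 h3

lemma deriv_fold_mp {extra} {ψ : LForm} (l : List LForm)
    (h : Deriv extra (l.foldr .imp ψ)) (hl : ∀ c ∈ l, Deriv extra c) :
    Deriv extra ψ := by
  induction l with
  | nil => exact h
  | cons c l ih =>
      exact ih (Deriv.mp h (hl c (by simp))) (fun c' hc' => hl c' (by simp [hc']))

lemma evalA_foldr_imp (l : List LForm) (ψ : LForm) (v w) :
    (l.foldr LForm.imp ψ).evalA v w = true ↔
      ((∀ c ∈ l, c.evalA v w = true) → ψ.evalA v w = true) := by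
  induction l with
  | nil => simp
  | cons c l ih =>
      simp only [List.foldr_cons, evalA_imp, Bool.or_eq_true, Bool.not_eq_true', ih,
        List.mem_cons]
      constructor
      · rintro (hc | h) hall
        · exact absurd (hall c (Or.inl rfl)) (by simp [hc])
        · exact h fun c' hc' => hall c' (Or.inr hc')
      · intro h
        rcases hc : c.evalA v w with _ | _
        · exact Or.inl rfl
        · exact Or.inr fun hall => h (by rintro c' (rfl | hc') ; exacts [hc, hall c' hc'])

end Toolkit

end CausalSim
namespace CausalSim

/-! ### Part B: semantic lemmas, coherence, extraction from consistency -/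

section Semantics

lemma eval_foldr_and (S : List PropForm) (a : PropForm) (y : ℕ → Bool) :
    ((S.foldr .and a).eval y = true) ↔
      (a.eval y = true ∧ ∀ β ∈ S, β.eval y = true) := by
  induction S with
  | nil => simp
  | cons β S ih =>
      simp only [List.foldr_cons, PropForm.eval, Bool.and_eq_true, ih, List.mem_cons]
      constructor
      · rintro ⟨hb, ha, hS⟩; exact ⟨ha, by rintro β' (rfl | h); exacts [hb, hS β' h]⟩
      · rintro ⟨ha, h⟩; exact ⟨h β (Or.inl rfl), ha, fun β' hb => h β' (Or.inr hb)⟩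

lemma eval_lit (p : ℕ × Bool) (y : ℕ → Bool) :
    ((PropForm.lit p).eval y = true) ↔ y p.1 = p.2 := by
  rcases p with ⟨i, _ | _⟩ <;> simp [PropForm.lit, PropForm.eval]

lemma eval_top (y : ℕ → Bool) : PropForm.top.eval y = true := by
  simp [PropForm.top, PropForm.eval, eval_bot]

lemma eval_foldl_lit (l : List (ℕ × Bool)) (a : PropForm) (y : ℕ → Bool) :
    ((l.foldl (fun acc q => .and acc (.lit q)) a).eval y = true) ↔
      (a.eval y = true ∧ ∀ p ∈ l, y p.1 = p.2) := by
  induction l generalizing a with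
  | nil => simp
  | cons p l ih =>
      simp only [List.foldl_cons, ih, PropForm.eval, Bool.and_eq_true, eval_lit,
        List.mem_cons]
      constructor
      · rintro ⟨⟨ha, hp⟩, hl⟩; exact ⟨ha, by rintro q (rfl | h); exacts [hp, hl q h]⟩
      · rintro ⟨ha, h⟩; exact ⟨⟨ha, h p (Or.inl rfl)⟩, fun q hq => h q (Or.inr hq)⟩

lemma eval_toProp (α : Lint) (y : ℕ → Bool) :
    (α.toProp.eval y = true) ↔ ∀ p ∈ α.1, y p.1 = p.2 := by
  rcases α with ⟨l, hl⟩
  rcases l with _ | ⟨p, rest⟩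
  · simp [Lint.toProp, eval_top]
  · show ((rest.foldl (fun acc q => PropForm.and acc (PropForm.lit q)) (PropForm.lit p)).eval y = true) ↔ _
    rw [eval_foldl_lit, eval_lit]
    simp only [List.mem_cons]
    constructor
    · rintro ⟨hp, h⟩; rintro q (rfl | hq); exacts [hp, h q hq]
    · rintro h; exact ⟨h p (Or.inl rfl), fun q hq => h q (Or.inr hq)⟩

lemma eval_congr {φ : PropForm} {v v' : ℕ → Bool}
    (h : ∀ i ≤ φ.maxAtom, v i = v' i) : φ.eval v = φ.eval v' := by
  induction φ with
  | atom i => exact h i le_rfl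
  | neg φ ih => simp only [PropForm.eval]; rw [ih (fun i hi => h i hi)]
  | and φ ψ ihφ ihψ =>
      simp only [PropForm.eval]
      rw [ihφ (fun i hi => h i (le_trans hi (le_max_left _ _))),
        ihψ (fun i hi => h i (le_trans hi (le_max_right _ _)))]
  | or φ ψ ihφ ihψ =>
      simp only [PropForm.eval]
      rw [ihφ (fun i hi => h i (le_trans hi (le_max_left _ _))),
        ihψ (fun i hi => h i (le_trans hi (le_max_right _ _)))]

/-- The conditional pairs occurring in an `L`-formula. -/
def LForm.condPairs : LForm → List (Lint × PropForm)
  | .atom _ => []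
  | .cond α β => [(α, β)]
  | .neg φ => φ.condPairs
  | .and φ ψ => φ.condPairs ++ ψ.condPairs
  | .or φ ψ => φ.condPairs ++ ψ.condPairs

lemma mem_condPairs_maxAtom {φ : LForm} {α : Lint} {β : PropForm}
    (h : (α, β) ∈ φ.condPairs) : α.maxAtom ≤ φ.maxAtom ∧ β.maxAtom ≤ φ.maxAtom := by
  induction φ with
  | atom i => simp [LForm.condPairs] at h
  | cond α' β' =>
      simp only [LForm.condPairs, List.mem_singleton, Prod.mk.injEq] at h
      rcases h with ⟨rfl, rfl⟩
      exact ⟨le_max_left _ _, le_max_right _ _⟩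
  | neg φ ih => exact ih h
  | and φ ψ ihφ ihψ =>
      rcases List.mem_append.1 h with h | h
      · exact ⟨le_trans (ihφ h).1 (le_max_left _ _), le_trans (ihφ h).2 (le_max_left _ _)⟩
      · exact ⟨le_trans (ihψ h).1 (le_max_right _ _), le_trans (ihψ h).2 (le_max_right _ _)⟩
  | or φ ψ ihφ ihψ =>
      rcases List.mem_append.1 h with h | h
      · exact ⟨le_trans (ihφ h).1 (le_max_left _ _), le_trans (ihφ h).2 (le_max_left _ _)⟩
      · exact ⟨le_trans (ihψ h).1 (le_max_right _ _), le_trans (ihψ h).2 (le_max_right _ _)⟩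

/-- A propositional formula is satisfiable. -/
def SatP (γ : PropForm) : Prop := ∃ y : ℕ → Bool, γ.eval y = true

/-- The consequents of the conditionals of `φ` with antecedent `α`. -/
def consOf (φ : LForm) (α : Lint) : List PropForm :=
  (φ.condPairs.filter fun p => decide (p.1 = α)).map Prod.snd

lemma mem_consOf {φ : LForm} {α : Lint} {β : PropForm} :
    β ∈ consOf φ α ↔ (α, β) ∈ φ.condPairs := by
  simp only [consOf, List.mem_map, List.mem_filter, decide_eq_true_eq]
  constructor
  · rintro ⟨⟨α', β'⟩, ⟨hm, rfl⟩, rfl⟩; exact hm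
  · intro h; exact ⟨(α, β), ⟨h, rfl⟩, rfl⟩

/-- The conjunction of the positive (according to `w`) consequents of `α`
in `φ`, together with `α` itself. -/
def conjPos (φ : LForm) (w : Lint → PropForm → Bool) (α : Lint) : PropForm :=
  ((consOf φ α).filter fun β => w α β).foldr .and α.toProp

/-- `w` is coherent for `φ`: the positive part of each antecedent is jointly
satisfiable, and stays satisfiable together with the negation of any
non-positive consequent. -/
def Coh (φ : LForm) (w : Lint → PropForm → Bool) : Prop :=
  ∀ α ∈ φ.condPairs.map Prod.fst,
    SatP (conjPos φ w α) ∧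
    ∀ β ∈ consOf φ α, w α β = false → SatP (.and (.neg β) (conjPos φ w α))

open Classical in
/-- Extraction of a coherent propositional witness from `AX↓`-consistency. -/
lemma exists_coherent {φ : LForm} (h : ¬ Deriv axD (.neg φ)) :
    ∃ (v : ℕ → Bool) (w : Lint → PropForm → Bool),
      φ.evalA v w = true ∧ Coh φ w := by
  by_contra hno
  push_neg at hno
  apply h
  -- the clause list
  set ants : List Lint := φ.condPairs.map Prod.fst with hants
  set cls : List LForm := ants.flatMap (fun α =>
    (consOf φ α).sublists.flatMap (fun S =>
      (if SatP (S.foldr .and α.toProp) then [] else [chainC α S PropForm.bot.toL]) ++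
      ((consOf φ α).filterMap fun β =>
        if SatP (.and (.neg β) (S.foldr .and α.toProp)) then none
        else some (chainC α S (.cond α β))))) with hcls
  -- every clause is derivable
  have hder : ∀ c ∈ cls, Deriv axD c := by
    intro c hc
    rw [hcls] at hc
    simp only [List.mem_flatMap, List.mem_append, List.mem_filterMap] at hc
    obtain ⟨α, -, S, -, hc⟩ := hc
    rcases hc with hc | ⟨β, -, hc⟩
    · -- unsatisfiable positive part: derive the chain ending in ⊥
      split at hc
      · simp at hc
      · rename_i hunsat
        simp only [List.mem_singleton] at hc
        subst hc
        set F := S.foldr PropForm.and α.toProp with hF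
        have h1 : Deriv axD ((LForm.cond α F).imp (.cond α (.neg F))) := by
          apply deriv_rw
          intro v hv
          exact absurd ⟨v, hv⟩ hunsat
        have h2 : Deriv axD ((LForm.cond α F).imp (.neg (.cond α (.neg F)))) :=
          Deriv.extra ⟨α, F, rfl⟩
        have h3 : Deriv axD ((LForm.cond α F).imp PropForm.bot.toL) :=
          Deriv.mp (Deriv.mp (Deriv.taut (taut_contr (LForm.cond α F)
            (.cond α (.neg F)))) h1) h2
        exact Deriv.mp (deriv_chain_mono α S h3) (deriv_chain_collect α S)
    · -- the implication clause
      split at hc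
      · simp at hc
      · rename_i hunsat
        simp only [Option.some.injEq] at hc
        subst hc
        set F := S.foldr PropForm.and α.toProp with hF
        have h1 : Deriv axD ((LForm.cond α F).imp (.cond α β)) := by
          apply deriv_rw
          intro v hv
          by_contra hb
          have hb' : β.eval v = false := by revert hb; cases (β.eval v) <;> simp
          exact hunsat ⟨v, by simp [PropForm.eval, hv, hb']⟩
        exact Deriv.mp (deriv_chain_mono α S h1) (deriv_chain_collect α S)
  -- the chain of clauses ending in ¬φ is a tautology
  have htaut : Tautology (cls.foldr .imp (.neg φ)) := by
    intro v w
    rw [evalA_foldr_imp]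
    intro hall
    show (!(φ.evalA v w)) = true
    rcases hφ : φ.evalA v w with _ | _
    · rfl
    · exfalso
      have hcoh := hno v w hφ
      rw [Coh] at hcoh
      push_neg at hcoh
      obtain ⟨α, hα, hbad⟩ := hcoh
      set Pos : List PropForm := (consOf φ α).filter (fun β => w α β) with hPos
      have hSub : Pos ∈ (consOf φ α).sublists :=
        List.mem_sublists.2 (List.filter_sublist)
      have hPosTrue : ∀ c ∈ Pos.map (LForm.cond α), c.evalA v w = true := by
        intro c hcm
        simp only [List.mem_map] at hcm
        obtain ⟨β, hβ, rfl⟩ := hcm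
        have := (List.mem_filter.1 hβ).2
        simpa [LForm.evalA] using this
      by_cases hsat : SatP (conjPos φ w α)
      · obtain ⟨β, hβ, hwβ, hunsat⟩ := hbad hsat
        have hmem : chainC α Pos (.cond α β) ∈ cls := by
          rw [hcls]
          simp only [List.mem_flatMap, List.mem_append, List.mem_filterMap]
          refine ⟨α, hα, Pos, hSub, Or.inr ⟨β, hβ, ?_⟩⟩
          rw [if_neg (by rw [conjPos] at hunsat; exact hunsat)]
        have := hall _ hmem
        rw [chainC, evalA_foldr_imp] at this
        have := this hPosTrue
        simp only [LForm.evalA] at this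
        rw [hwβ] at this
        exact Bool.false_ne_true this
      · have hmem : chainC α Pos PropForm.bot.toL ∈ cls := by
          rw [hcls]
          simp only [List.mem_flatMap, List.mem_append, List.mem_filterMap]
          refine ⟨α, hα, Pos, hSub, Or.inl ?_⟩
          rw [if_neg (by rw [conjPos] at hsat; exact hsat)]
          simp
        have := hall _ hmem
        rw [chainC, evalA_foldr_imp] at this
        have := this hPosTrue
        rw [evalA_toL, eval_bot] at this
        exact Bool.false_ne_true this
  exact deriv_fold_mp cls (Deriv.taut htaut) hder

end Semantics

end CausalSim
namespace CausalSim

/-! ### Part C: lemmas on `L_int` -/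

section LintLemmas

instance : IsTrans (ℕ × Bool) (fun p q => p.1 < q.1) :=
  ⟨fun _ _ _ h1 h2 => lt_trans h1 h2⟩

instance : IsAntisymm (ℕ × Bool) (fun p q => p.1 < q.1) :=
  ⟨fun _ _ h1 h2 => absurd (lt_trans h1 h2) (lt_irrefl _)⟩

lemma lint_pairwise (α : Lint) : α.1.Pairwise (fun p q => p.1 < q.1) :=
  List.isChain_iff_pairwise.1 α.2

lemma le_foldr_max {a : ℕ} {l : List ℕ} (h : a ∈ l) : a ≤ l.foldr max 0 := by
  induction l with
  | nil => simp at h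
  | cons b l ih =>
      rcases List.mem_cons.1 h with rfl | h
      · exact le_max_left _ _
      · exact le_trans (ih h) (le_max_right _ _)

lemma key_le_maxAtom {α : Lint} {p : ℕ × Bool} (h : p ∈ α.1) : p.1 ≤ α.maxAtom :=
  le_foldr_max (List.mem_map_of_mem (f := Prod.fst) h)

lemma itv_eq_some_iff {α : Lint} {i : ℕ} {b : Bool} :
    α.itv i = some b ↔ (i, b) ∈ α.1 := by
  constructor
  · intro h
    rw [Lint.itv, Option.map_eq_some_iff] at h
    obtain ⟨p, hp, rfl⟩ := h
    have hm := List.mem_of_find?_eq_some hp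
    have hkey : p.1 = i := by
      have := List.find?_some hp
      simpa using this
    rcases p with ⟨j, b⟩
    cases hkey
    exact hm
  · intro h
    have hpw := lint_pairwise α
    rw [Lint.itv]
    revert h hpw
    -- find the unique entry with key i
    induction α.1 with
    | nil => intro h _; simp at h
    | cons p l ih =>
        intro h hpw
        rcases List.mem_cons.1 h with rfl | h'
        · simp [List.find?_cons]
        · have hlt : i ≠ p.1 := by
            have := (List.pairwise_cons.1 hpw).1 _ h'
            omega
          have hb : (p.1 == i) = false := by simp [Ne.symm hlt]
          rw [List.find?_cons, hb]
          exact ih h' (List.pairwise_cons.1 hpw).2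

lemma itv_eq_none_iff {α : Lint} {i : ℕ} :
    α.itv i = none ↔ ∀ b, (i, b) ∉ α.1 := by
  constructor
  · intro h b hb
    rw [← itv_eq_some_iff] at hb
    rw [h] at hb
    exact nomatch hb
  · intro h
    rcases ho : α.itv i with _ | b
    · rfl
    · exact absurd (itv_eq_some_iff.1 ho) (h b)

lemma lint_eq_of_itv {α α' : Lint} {N : ℕ}
    (hN : α.maxAtom < N) (hN' : α'.maxAtom < N)
    (h : ∀ i < N, α.itv i = α'.itv i) : α = α' := by
  apply Subtype.ext
  have hmem : ∀ p, p ∈ α.1 ↔ p ∈ α'.1 := by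
    rintro ⟨i, b⟩
    rw [← itv_eq_some_iff, ← itv_eq_some_iff]
    constructor
    · intro hs
      rw [← h i (lt_of_le_of_lt (key_le_maxAtom (itv_eq_some_iff.1 hs)) hN)]
      exact hs
    · intro hs
      rw [h i (lt_of_le_of_lt (key_le_maxAtom (itv_eq_some_iff.1 hs)) hN')]
      exact hs
  have hnd : α.1.Nodup := (lint_pairwise α).imp (fun h => by
    intro heq; rw [heq] at h; exact lt_irrefl _ h)
  have hnd' : α'.1.Nodup := (lint_pairwise α').imp (fun h => by
    intro heq; rw [heq] at h; exact lt_irrefl _ h)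
  exact List.Perm.eq_of_pairwise (fun _ _ _ _ h1 h2 => absurd (lt_trans h1 h2) (lt_irrefl _))
    (lint_pairwise α) (lint_pairwise α') ((List.perm_ext_iff_of_nodup hnd hnd').2 hmem)

lemma initTape_of_itv_some {itv : ℕ → Option Bool} {x : ℕ → Bool} {i : ℕ} {b : Bool}
    (h : itv i = some b) : initTape itv x i = b := by
  simp [initTape, h]

lemma initTape_of_itv_none {itv : ℕ → Option Bool} {x : ℕ → Bool} {i : ℕ}
    (h : itv i = none) : initTape itv x i = x i := by
  simp [initTape, h]

/-- The length-`N` truncation of a valuation. -/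
def truncN (N : ℕ) (y : ℕ → Bool) : List Bool := (List.range N).map y

lemma truncN_getD {N : ℕ} {y : ℕ → Bool} {m : ℕ} (h : m < N) :
    (truncN N y).getD m false = y m := by
  rw [truncN, List.getD, List.getElem?_map, List.getElem?_range h]
  rfl

end LintLemmas

end CausalSim
namespace CausalSim

/-! ### Part D: the canonical machine -/

section MachineDef

/-- Control states of the canonical machine. -/
inductive MSt : Type
  | A (i : ℕ) (sig : List (Option Bool))
  | B (i : ℕ) (sig : List (Option Bool)) (r : Bool)
  | C (i : ℕ) (sig : List (Option Bool)) (r : Bool)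
  | W (j : ℕ) (pat : List Bool)
  | H
  deriving DecidableEq

def MSt.toTup : MSt → ℕ × ℕ × List (Option Bool) × List Bool × Bool
  | .A i sig => (0, i, sig, [], false)
  | .B i sig r => (1, i, sig, [], r)
  | .C i sig r => (2, i, sig, [], r)
  | .W j pat => (3, j, [], pat, false)
  | .H => (4, 0, [], [], false)

lemma MSt.toTup_injective : Function.Injective MSt.toTup := by
  intro a b h
  cases a <;> cases b <;> simp_all [MSt.toTup]

/-- An injective encoding of the control states, with the initial state
encoded as `0`. -/
def MSt.enc (st : MSt) : ℕ :=
  if st = .A 0 [] then 0 else Encodable.encode st.toTup + 1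

lemma MSt.enc_injective : Function.Injective MSt.enc := by
  intro a b h
  unfold MSt.enc at h
  split at h <;> split at h
  · rename_i h1 h2; rw [h1, h2]
  · exact absurd h (by omega)
  · exact absurd h (by omega)
  · exact MSt.toTup_injective (Encodable.encode_injective (by omega))

/-- All signature lists of a given length. -/
def allSigs : ℕ → List (List (Option Bool))
  | 0 => [[]]
  | n+1 => (allSigs n).flatMap fun s => [s ++ [none], s ++ [some false], s ++ [some true]]

lemma mem_allSigs_of_length : ∀ {n : ℕ} {s : List (Option Bool)},
    s.length = n → s ∈ allSigs n := by
  intro n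
  induction n with
  | zero => intro s h; simp [List.length_eq_zero_iff.1 h, allSigs]
  | succ n ih =>
      intro s h
      have hne : s ≠ [] := by intro hs; rw [hs] at h; simp at h
      have hd : s.dropLast ++ [s.getLast hne] = s := List.dropLast_append_getLast hne
      show s ∈ (allSigs n).flatMap _
      refine List.mem_flatMap.2 ⟨s.dropLast,
        ih (by rw [List.length_dropLast, h]; rfl), ?_⟩
      rcases hlast : s.getLast hne with _ | (_|_) <;> rw [← hd, hlast] <;> simp

variable (N : ℕ) (outs : List (Option Bool) → List (List Bool))

/-- All patterns occurring in `outs`. -/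
def wPats : List (List Bool) := (allSigs N).flatMap outs

/-- The enumeration of the (used) control states. -/
def mEnum : List MSt :=
  ((List.range (N+1)).flatMap fun i => (allSigs i).map (MSt.A i))
  ++ ((List.range N).flatMap fun i => (allSigs i).flatMap fun s =>
        [MSt.B i s false, MSt.B i s true, MSt.C i s false, MSt.C i s true])
  ++ ((List.range N).flatMap fun j => (wPats N outs).map (MSt.W j))

/-- The transition function of the canonical machine. -/
def mDelta : MSt → Bool → List (MSt × Bool × Bool)
  | .A i sig, r =>
      if i < N then [(.B i sig r, !r, true)]
      else (outs sig).map fun pat => (.W (N-1) pat, r, false)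
  | .B i sig r, s => [(.C i sig r, s, false)]
  | .C i sig r, r' => [(.A (i+1) (sig ++ [if r' = r then some r else none]), r', true)]
  | .W j pat, _ => [(if j = 0 then .H else .W (j-1) pat, pat.getD j false, false)]
  | .H, _ => []

/-- The canonical machine. -/
def mkMachine : Machine :=
  (mEnum N outs).flatMap fun st => [false, true].flatMap fun b =>
    (mDelta N outs st b).map fun d => ((st.enc, b), (d.1.enc, d.2.1, d.2.2))

lemma mem_mkMachine {r : Rule} :
    r ∈ mkMachine N outs ↔ ∃ st ∈ mEnum N outs, ∃ b, ∃ d ∈ mDelta N outs st b,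
      r = ((st.enc, b), (d.1.enc, d.2.1, d.2.2)) := by
  simp only [mkMachine, List.mem_flatMap, List.mem_map, List.mem_cons,
    List.mem_singleton]
  constructor
  · rintro ⟨st, hst, b, -, d, hd, rfl⟩
    exact ⟨st, hst, b, d, hd, rfl⟩
  · rintro ⟨st, hst, b, d, hd, rfl⟩
    refine ⟨st, hst, b, ?_, d, hd, rfl⟩
    cases b <;> simp

lemma mstep_iff {itv : ℕ → Option Bool} {st : MSt} {p : ℕ} {t : ℕ → Bool} {c' : Cfg} :
    MStep (mkMachine N outs) itv ⟨st.enc, p, t⟩ c' ↔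
      (st ∈ mEnum N outs ∧ ∃ d ∈ mDelta N outs st (t p),
        c' = ⟨d.1.enc, movePos p d.2.2, writeTape itv t p d.2.1⟩) := by
  constructor
  · rintro ⟨r, hrT, hr1, hc'⟩
    obtain ⟨st', hst', b, d, hd, rfl⟩ := (mem_mkMachine N outs).1 hrT
    simp only [Prod.mk.injEq] at hr1
    obtain ⟨h1, h2⟩ := hr1
    cases MSt.enc_injective h1
    cases h2
    exact ⟨hst', d, hd, hc'⟩
  · rintro ⟨hst, d, hd, rfl⟩
    exact ⟨((st.enc, t p), (d.1.enc, d.2.1, d.2.2)),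
      (mem_mkMachine N outs).2 ⟨st, hst, t p, d, hd, rfl⟩, rfl, rfl⟩

lemma halted_of_delta_nil {itv : ℕ → Option Bool} {st : MSt} {p : ℕ} {t : ℕ → Bool}
    (h : mDelta N outs st (t p) = []) : Halted (mkMachine N outs) ⟨st.enc, p, t⟩ := by
  rintro r hr heq
  obtain ⟨st', hst', b, d, hd, rfl⟩ := (mem_mkMachine N outs).1 hr
  simp only [Prod.mk.injEq] at heq
  obtain ⟨h1, h2⟩ := heq
  cases MSt.enc_injective h1
  cases h2
  rw [h] at hd
  simp at hd

lemma not_halted_of_delta_ne_nil {itv : ℕ → Option Bool} {st : MSt} {p : ℕ}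
    {t : ℕ → Bool} (hst : st ∈ mEnum N outs) (h : mDelta N outs st (t p) ≠ []) :
    ¬ Halted (mkMachine N outs) ⟨st.enc, p, t⟩ := by
  intro hH
  obtain ⟨d, hd⟩ := List.exists_mem_of_ne_nil _ h
  exact hH _ ((mem_mkMachine N outs).2 ⟨st, hst, t p, d, hd, rfl⟩) rfl

-- enumeration membership lemmas
lemma memA {i : ℕ} {itv : ℕ → Option Bool} (h : i ≤ N) : MSt.A i ((List.range i).map itv) ∈ mEnum N outs := by
  refine List.mem_append.2 (Or.inl (List.mem_append.2 (Or.inl ?_)))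
  exact List.mem_flatMap.2 ⟨i, List.mem_range.2 (by omega),
    List.mem_map.2 ⟨(List.range i).map itv, mem_allSigs_of_length (by simp), rfl⟩⟩

lemma memB {i : ℕ} {r : Bool} {itv : ℕ → Option Bool} (h : i < N) :
    MSt.B i ((List.range i).map itv) r ∈ mEnum N outs := by
  refine List.mem_append.2 (Or.inl (List.mem_append.2 (Or.inr ?_)))
  exact List.mem_flatMap.2 ⟨i, List.mem_range.2 h,
    List.mem_flatMap.2 ⟨(List.range i).map itv, mem_allSigs_of_length (by simp),
      by cases r <;> simp⟩⟩

lemma memC {i : ℕ} {r : Bool} {itv : ℕ → Option Bool} (h : i < N) :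
    MSt.C i ((List.range i).map itv) r ∈ mEnum N outs := by
  refine List.mem_append.2 (Or.inl (List.mem_append.2 (Or.inr ?_)))
  exact List.mem_flatMap.2 ⟨i, List.mem_range.2 h,
    List.mem_flatMap.2 ⟨(List.range i).map itv, mem_allSigs_of_length (by simp),
      by cases r <;> simp⟩⟩

lemma memW {j : ℕ} {pat : List Bool} {itv : ℕ → Option Bool} (hj : j < N)
    (hpat : pat ∈ outs ((List.range N).map itv)) : MSt.W j pat ∈ mEnum N outs := by
  refine List.mem_append.2 (Or.inr ?_)
  refine List.mem_flatMap.2 ⟨j, List.mem_range.2 hj, List.mem_map.2 ⟨pat, ?_, rfl⟩⟩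
  exact List.mem_flatMap.2 ⟨(List.range N).map itv, mem_allSigs_of_length (by simp), hpat⟩

end MachineDef

end CausalSim
namespace CausalSim

section MachineRun

variable (N : ℕ) (outs : List (Option Bool) → List (List Bool))
variable (itv : ℕ → Option Bool) (x : ℕ → Bool)

/-- The signature of the first `i` cells of the intervention. -/
def mSg (i : ℕ) : List (Option Bool) := (List.range i).map itv

/-- The tape after the first `i` toggle-probes. -/
def mTog (i : ℕ) : ℕ → Bool :=
  fun m => if m < i ∧ itv m = none then !(initTape itv x m) else initTape itv x m

/-- The final tape for the pattern `pat`. -/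
def mFin (pat : List Bool) : ℕ → Bool :=
  fun m => if m < N ∧ itv m = none then pat.getD m false else initTape itv x m

/-- The tape during the writing sweep, cells above `j` already written. -/
def mWt (pat : List Bool) (j : ℕ) : ℕ → Bool :=
  fun m => if m ≤ j then mTog itv x N m else mFin N itv x pat m

lemma mSg_zero : mSg itv 0 = [] := by simp [mSg]

lemma mSg_succ (i : ℕ) : mSg itv (i+1) = mSg itv i ++ [itv i] := by
  simp [mSg, List.range_succ]

lemma mTog_zero : mTog itv x 0 = initTape itv x := by
  funext m; simp [mTog]

lemma mTog_self (i : ℕ) : mTog itv x i i = initTape itv x i := by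
  simp [mTog]

lemma mTog_ge {i m : ℕ} (h : i ≤ m) : mTog itv x i m = initTape itv x m := by
  simp only [mTog]
  rw [if_neg (by rintro ⟨h1, -⟩; omega)]

lemma mTog_in {i m : ℕ} (h1 : m < i) (h2 : itv m = none) :
    mTog itv x i m = !(initTape itv x m) := by
  simp only [mTog]; rw [if_pos ⟨h1, h2⟩]

lemma mTog_itv {i m : ℕ} (h : itv m ≠ none) : mTog itv x i m = initTape itv x m := by
  simp only [mTog]; rw [if_neg (by rintro ⟨-, h2⟩; exact h h2)]

lemma mFin_in {pat : List Bool} {m : ℕ} (h1 : m < N) (h2 : itv m = none) :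
    mFin N itv x pat m = pat.getD m false := by
  simp only [mFin]; rw [if_pos ⟨h1, h2⟩]

lemma mFin_out {pat : List Bool} {m : ℕ} (h : ¬(m < N ∧ itv m = none)) :
    mFin N itv x pat m = initTape itv x m := by
  simp only [mFin]; rw [if_neg h]

lemma mWt_le {pat : List Bool} {m j : ℕ} (h : m ≤ j) :
    mWt N itv x pat j m = mTog itv x N m := by
  simp only [mWt]; rw [if_pos h]

lemma mWt_gt {pat : List Bool} {m j : ℕ} (h : ¬ m ≤ j) :
    mWt N itv x pat j m = mFin N itv x pat m := by
  simp only [mWt]; rw [if_neg h]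

lemma writeTape_self (t : ℕ → Bool) (p : ℕ) : writeTape itv t p (t p) = t := by
  unfold writeTape
  split
  · exact Function.update_eq_self _ _
  · rfl

lemma write_mTog (i : ℕ) :
    writeTape itv (mTog itv x i) i (!(initTape itv x i)) = mTog itv x (i+1) := by
  funext m
  unfold writeTape
  by_cases hi : itv i = none
  · rw [if_pos hi, Function.update_apply]
    by_cases hm : m = i
    · subst hm
      rw [if_pos rfl, mTog_in itv x (by omega) hi]
    · rw [if_neg hm]
      by_cases hc : m < i ∧ itv m = none
      · rw [mTog_in itv x hc.1 hc.2, mTog_in itv x (by omega) hc.2]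
      · rw [mTog, mTog]
        rw [if_neg hc, if_neg (by rintro ⟨h1, h2⟩; exact hc ⟨by omega, h2⟩)]
  · rw [if_neg hi]
    by_cases hm : m = i
    · subst hm
      rw [mTog_itv itv x (by simp [hi]), mTog_itv itv x (by simp [hi])]
    · by_cases hc : m < i ∧ itv m = none
      · rw [mTog_in itv x hc.1 hc.2, mTog_in itv x (by omega) hc.2]
      · rw [mTog, mTog]
        rw [if_neg hc, if_neg (by rintro ⟨h1, h2⟩; exact hc ⟨by omega, h2⟩)]

lemma verdict_eq (i : ℕ) :
    (if mTog itv x (i+1) i = initTape itv x i then some (initTape itv x i) else none)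
      = itv i := by
  by_cases hi : itv i = none
  · rw [mTog_in itv x (by omega) hi, if_neg (by simp), hi]
  · obtain ⟨b, hb⟩ := Option.ne_none_iff_exists'.1 hi
    rw [mTog_itv itv x (by simp [hb]), if_pos rfl, hb, initTape_of_itv_some hb]

lemma mWt_top (hN : 0 < N) (pat : List Bool) :
    mWt N itv x pat (N-1) = mTog itv x N := by
  funext m
  by_cases hm : m ≤ N - 1
  · rw [mWt_le N itv x hm]
  · rw [mWt_gt N itv x hm, mFin_out N itv x (by rintro ⟨h1, -⟩; omega),
      mTog_ge itv x (by omega)]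

lemma write_mWt_succ (pat : List Bool) (j : ℕ) (hj : j + 1 < N) :
    writeTape itv (mWt N itv x pat (j+1)) (j+1) (pat.getD (j+1) false)
      = mWt N itv x pat j := by
  funext m
  unfold writeTape
  by_cases hi : itv (j+1) = none
  · rw [if_pos hi, Function.update_apply]
    by_cases hm : m = j + 1
    · subst hm
      rw [if_pos rfl, mWt_gt N itv x (by omega), mFin_in N itv x hj hi]
    · rw [if_neg hm]
      by_cases hc : m ≤ j
      · rw [mWt_le N itv x (by omega), mWt_le N itv x hc]
      · rw [mWt_gt N itv x (by omega), mWt_gt N itv x hc]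
  · rw [if_neg hi]
    by_cases hm : m = j + 1
    · subst hm
      rw [mWt_le N itv x (le_refl _), mWt_gt N itv x (by omega),
        mFin_out N itv x (by rintro ⟨-, h⟩; exact hi h),
        mTog_itv itv x (by simp [hi])]
    · by_cases hc : m ≤ j
      · rw [mWt_le N itv x (by omega), mWt_le N itv x hc]
      · rw [mWt_gt N itv x (by omega), mWt_gt N itv x hc]

lemma write_mWt_zero (hN : 0 < N) (pat : List Bool) :
    writeTape itv (mWt N itv x pat 0) 0 (pat.getD 0 false) = mFin N itv x pat := by
  funext m
  unfold writeTape
  by_cases hi : itv 0 = none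
  · rw [if_pos hi, Function.update_apply]
    by_cases hm : m = 0
    · subst hm
      rw [if_pos rfl, mFin_in N itv x hN hi]
    · rw [if_neg hm, mWt_gt N itv x (by omega)]
  · rw [if_neg hi]
    by_cases hm : m = 0
    · subst hm
      rw [mWt_le N itv x (le_refl _), mTog_itv itv x (by simp [hi]),
        mFin_out N itv x (by rintro ⟨-, h⟩; exact hi h)]
    · rw [mWt_gt N itv x (by omega)]

end MachineRun

end CausalSim
namespace CausalSim

/-- The invariant describing all reachable configurations of the canonical
machine. -/
inductive GoodCfg (N : ℕ) (outs : List (Option Bool) → List (List Bool))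
    (itv : ℕ → Option Bool) (x : ℕ → Bool) : Cfg → Prop
  | gA {i : ℕ} (h : i ≤ N) :
      GoodCfg N outs itv x ⟨(MSt.A i (mSg itv i)).enc, i, mTog itv x i⟩
  | gB {i : ℕ} (h : i < N) :
      GoodCfg N outs itv x
        ⟨(MSt.B i (mSg itv i) (initTape itv x i)).enc, i+1, mTog itv x (i+1)⟩
  | gC {i : ℕ} (h : i < N) :
      GoodCfg N outs itv x
        ⟨(MSt.C i (mSg itv i) (initTape itv x i)).enc, i, mTog itv x (i+1)⟩
  | gW {pat : List Bool} {j : ℕ} (hp : pat ∈ outs (mSg itv N)) (hj : j < N) :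
      GoodCfg N outs itv x ⟨(MSt.W j pat).enc, j, mWt N itv x pat j⟩
  | gH {pat : List Bool} (hp : pat ∈ outs (mSg itv N)) :
      GoodCfg N outs itv x ⟨(MSt.H).enc, 0, mFin N itv x pat⟩

lemma movePos_true (p : ℕ) : movePos p true = p + 1 := rfl

lemma movePos_false (p : ℕ) : movePos p false = p - 1 := rfl

section MachineMain

variable {N : ℕ} {outs : List (Option Bool) → List (List Bool)}
variable {itv : ℕ → Option Bool} {x : ℕ → Bool}

lemma good_step (hN : 0 < N) {c c' : Cfg} (hg : GoodCfg N outs itv x c)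
    (hs : MStep (mkMachine N outs) itv c c') : GoodCfg N outs itv x c' := by
  cases hg with
  | @gA i h =>
      obtain ⟨-, d, hd, rfl⟩ := (mstep_iff N outs).1 hs
      by_cases hiN : i < N
      · simp only [mDelta, if_pos hiN, List.mem_singleton] at hd
        subst hd
        rw [movePos_true]
        rw [mTog_self itv x i, write_mTog itv x i]
        exact GoodCfg.gB hiN
      · have hieq : i = N := by omega
        rw [hieq] at hd ⊢
        rw [hieq] at hiN
        simp only [mDelta, if_neg hiN, List.mem_map] at hd
        obtain ⟨pat, hpat, rfl⟩ := hd
        show GoodCfg N outs itv x ⟨(MSt.W (N-1) pat).enc, N-1,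
          writeTape itv (mTog itv x N) N (mTog itv x N N)⟩
        rw [writeTape_self itv, ← mWt_top N itv x hN pat]
        exact GoodCfg.gW hpat (by omega)
  | @gB i h =>
      obtain ⟨-, d, hd, rfl⟩ := (mstep_iff N outs).1 hs
      simp only [mDelta, List.mem_singleton] at hd
      subst hd
      rw [movePos_false]
      rw [writeTape_self itv]
      have : i + 1 - 1 = i := by omega
      rw [this]
      exact GoodCfg.gC h
  | @gC i h =>
      obtain ⟨-, d, hd, rfl⟩ := (mstep_iff N outs).1 hs
      simp only [mDelta, List.mem_singleton] at hd
      subst hd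
      rw [movePos_true]
      rw [writeTape_self itv, verdict_eq itv x i, ← mSg_succ itv i]
      exact GoodCfg.gA (by omega)
  | @gW pat j hp hj =>
      obtain ⟨-, d, hd, rfl⟩ := (mstep_iff N outs).1 hs
      simp only [mDelta, List.mem_singleton] at hd
      subst hd
      rw [movePos_false]
      by_cases hj0 : j = 0
      · subst hj0
        rw [if_pos rfl, write_mWt_zero N itv x hN pat]
        exact GoodCfg.gH hp
      · rw [if_neg hj0]
        obtain ⟨j', rfl⟩ : ∃ j', j = j' + 1 := ⟨j - 1, by omega⟩
        rw [write_mWt_succ N itv x pat j' hj]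
        have : j' + 1 - 1 = j' := by omega
        rw [this]
        exact GoodCfg.gW hp (by omega)
  | gH hp =>
      obtain ⟨-, d, hd, rfl⟩ := (mstep_iff N outs).1 hs
      simp [mDelta] at hd

lemma init_eq_cfgA0 : (⟨0, 0, initTape itv x⟩ : Cfg)
    = ⟨(MSt.A 0 (mSg itv 0)).enc, 0, mTog itv x 0⟩ := by
  rw [mSg_zero, mTog_zero]
  have : (MSt.A 0 []).enc = 0 := if_pos rfl
  rw [this]

lemma good_reach (hN : 0 < N) {c : Cfg}
    (h : Relation.ReflTransGen (MStep (mkMachine N outs) itv) ⟨0, 0, initTape itv x⟩ c) :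
    GoodCfg N outs itv x c := by
  induction h with
  | refl => rw [init_eq_cfgA0]; exact GoodCfg.gA (by omega)
  | tail _ hstep ih => exact good_step hN ih hstep

-- individual steps, for reachability
lemma stepAB (h : i < N) :
    MStep (mkMachine N outs) itv ⟨(MSt.A i (mSg itv i)).enc, i, mTog itv x i⟩
      ⟨(MSt.B i (mSg itv i) (initTape itv x i)).enc, i+1, mTog itv x (i+1)⟩ := by
  rw [mstep_iff]
  refine ⟨memA N outs (by omega), ⟨.B i (mSg itv i) (mTog itv x i i),
    !(mTog itv x i i), true⟩, ?_, ?_⟩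
  · simp [mDelta, if_pos h]
  · rw [mTog_self itv x i]
    rw [movePos_true]
    rw [write_mTog itv x i]
  
lemma stepBC (h : i < N) :
    MStep (mkMachine N outs) itv
      ⟨(MSt.B i (mSg itv i) (initTape itv x i)).enc, i+1, mTog itv x (i+1)⟩
      ⟨(MSt.C i (mSg itv i) (initTape itv x i)).enc, i, mTog itv x (i+1)⟩ := by
  rw [mstep_iff]
  refine ⟨memB N outs h, ⟨.C i (mSg itv i) (initTape itv x i),
    mTog itv x (i+1) (i+1), false⟩, by simp [mDelta], ?_⟩
  rw [movePos_false]
  rw [writeTape_self itv]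
  have : i + 1 - 1 = i := by omega
  rw [this]

lemma stepCA (h : i < N) :
    MStep (mkMachine N outs) itv
      ⟨(MSt.C i (mSg itv i) (initTape itv x i)).enc, i, mTog itv x (i+1)⟩
      ⟨(MSt.A (i+1) (mSg itv (i+1))).enc, i+1, mTog itv x (i+1)⟩ := by
  rw [mstep_iff]
  refine ⟨memC N outs h, ⟨.A (i+1) ((mSg itv i) ++
    [if mTog itv x (i+1) i = initTape itv x i then some (initTape itv x i) else none]),
    mTog itv x (i+1) i, true⟩, by simp [mDelta], ?_⟩
  rw [verdict_eq itv x i, ← mSg_succ itv i, writeTape_self itv]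
  rw [movePos_true]

lemma reach_A (hN : 0 < N) :
    ∀ i, i ≤ N → Relation.ReflTransGen (MStep (mkMachine N outs) itv)
      ⟨0, 0, initTape itv x⟩ ⟨(MSt.A i (mSg itv i)).enc, i, mTog itv x i⟩ := by
  intro i
  induction i with
  | zero => intro _; rw [← init_eq_cfgA0]
  | succ i ih =>
      intro h
      have hi : i < N := by omega
      exact (((ih (by omega)).tail (stepAB hi)).tail (stepBC hi)).tail (stepCA hi)

lemma stepAW (hN : 0 < N) {pat : List Bool} (hpat : pat ∈ outs (mSg itv N)) :
    MStep (mkMachine N outs) itv ⟨(MSt.A N (mSg itv N)).enc, N, mTog itv x N⟩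
      ⟨(MSt.W (N-1) pat).enc, N-1, mWt N itv x pat (N-1)⟩ := by
  rw [mstep_iff]
  refine ⟨memA N outs le_rfl, ⟨.W (N-1) pat, mTog itv x N N, false⟩, ?_, ?_⟩
  · simp only [mDelta, if_neg (lt_irrefl N), List.mem_map]
    exact ⟨pat, hpat, rfl⟩
  · rw [movePos_false]
    rw [writeTape_self itv, mWt_top N itv x hN pat]

lemma stepW_succ {pat : List Bool} (hpat : pat ∈ outs (mSg itv N)) {j : ℕ}
    (hj : j + 1 < N) :
    MStep (mkMachine N outs) itv ⟨(MSt.W (j+1) pat).enc, j+1, mWt N itv x pat (j+1)⟩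
      ⟨(MSt.W j pat).enc, j, mWt N itv x pat j⟩ := by
  rw [mstep_iff]
  refine ⟨memW N outs hj hpat, ⟨.W j pat, pat.getD (j+1) false, false⟩, ?_, ?_⟩
  · simp [mDelta]
  · rw [movePos_false]
    rw [write_mWt_succ N itv x pat j hj]
    have : j + 1 - 1 = j := by omega
    rw [this]

lemma stepW_zero (hN : 0 < N) {pat : List Bool} (hpat : pat ∈ outs (mSg itv N)) :
    MStep (mkMachine N outs) itv ⟨(MSt.W 0 pat).enc, 0, mWt N itv x pat 0⟩
      ⟨(MSt.H).enc, 0, mFin N itv x pat⟩ := by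
  rw [mstep_iff]
  refine ⟨memW N outs hN hpat, ⟨.H, pat.getD 0 false, false⟩, ?_, ?_⟩
  · simp [mDelta]
  · rw [movePos_false]
    rw [write_mWt_zero N itv x hN pat]

lemma reach_W {pat : List Bool} (hpat : pat ∈ outs (mSg itv N)) (hN : 0 < N) :
    ∀ j, j < N → Relation.ReflTransGen (MStep (mkMachine N outs) itv)
      ⟨(MSt.W j pat).enc, j, mWt N itv x pat j⟩ ⟨(MSt.H).enc, 0, mFin N itv x pat⟩ := by
  intro j
  induction j with
  | zero => intro _; exact Relation.ReflTransGen.single (stepW_zero hN hpat)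
  | succ j ih =>
      intro h
      exact Relation.ReflTransGen.head (stepW_succ hpat h) (ih (by omega))

/-- Characterization of the outputs of the canonical machine. -/
lemma outputs_char (hN : 0 < N) :
    Outputs (mkMachine N outs) itv x =
      {y | (outs (mSg itv N) = [] ∧ y = mTog itv x N) ∨
        ∃ pat ∈ outs (mSg itv N), y = mFin N itv x pat} := by
  ext y
  constructor
  · rintro ⟨c, hreach, hhalt, rfl⟩
    have hgood := good_reach hN hreach
    cases hgood with
    | @gA i h =>
        by_cases hiN : i < N
        · exact absurd hhalt (not_halted_of_delta_ne_nil (itv := itv) N outs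
            (memA N outs h) (by simp [mDelta, if_pos hiN]))
        · have hieq : i = N := by omega
          rcases houts : outs (mSg itv N) with _ | ⟨pat, ps⟩
          · exact Or.inl ⟨rfl, by rw [hieq]⟩
          · refine absurd hhalt (not_halted_of_delta_ne_nil (itv := itv) N outs
              (memA N outs h) ?_)
            rw [hieq]
            simp [mDelta, if_neg (lt_irrefl N), houts]
    | gB h =>
        exact absurd hhalt (not_halted_of_delta_ne_nil (itv := itv) N outs (memB N outs h)
          (by simp [mDelta]))
    | gC h =>
        exact absurd hhalt (not_halted_of_delta_ne_nil (itv := itv) N outs (memC N outs h)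
          (by simp [mDelta]))
    | gW hp hj =>
        exact absurd hhalt (not_halted_of_delta_ne_nil (itv := itv) N outs (memW N outs hj hp)
          (by simp [mDelta]))
    | gH hp => exact Or.inr ⟨_, hp, rfl⟩
  · rintro (⟨hnil, rfl⟩ | ⟨pat, hpat, rfl⟩)
    · exact ⟨⟨(MSt.A N (mSg itv N)).enc, N, mTog itv x N⟩, reach_A hN N le_rfl,
        halted_of_delta_nil (itv := itv) N outs (by simp [mDelta, if_neg (lt_irrefl N), hnil]), rfl⟩
    · refine ⟨⟨(MSt.H).enc, 0, mFin N itv x pat⟩, ?_,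
        halted_of_delta_nil (itv := itv) N outs (by simp [mDelta]), rfl⟩
      exact ((reach_A hN N le_rfl).tail (stepAW hN hpat)).trans
        (reach_W hpat hN (N-1) (by omega))

lemma outputs_nonempty (hN : 0 < N) : (Outputs (mkMachine N outs) itv x).Nonempty := by
  rw [outputs_char hN]
  rcases houts : outs (mSg itv N) with _ | ⟨pat, ps⟩
  · exact ⟨mTog itv x N, Or.inl ⟨rfl, rfl⟩⟩
  · exact ⟨mFin N itv x pat, Or.inr ⟨pat, List.mem_cons_self, rfl⟩⟩

end MachineMain

end CausalSim
namespace CausalSim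

/-! ### Part E: the canonical model and the completeness theorem -/

section Model

lemma mSg_apply_eq {itv itv' : ℕ → Option Bool} {N i : ℕ} (hi : i < N)
    (h : mSg itv N = mSg itv' N) : itv i = itv' i := by
  have := congrArg (fun l => l[i]?) h
  simpa [mSg, List.getElem?_map, List.getElem?_range hi] using this

lemma mSg_inj {α α' : Lint} {N : ℕ} (hα : α.maxAtom < N) (hα' : α'.maxAtom < N)
    (h : mSg α.itv N = mSg α'.itv N) : α = α' :=
  lint_eq_of_itv hα hα' (fun i hi => mSg_apply_eq hi h)

variable (φ : LForm) (w : Lint → PropForm → Bool)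

open Classical in
/-- The default output valuation for antecedent `α`. -/
noncomputable def cY0 (α : Lint) : ℕ → Bool :=
  if h : SatP (conjPos φ w α) then h.choose else fun _ => false

open Classical in
/-- The witness output valuation refuting consequent `β`. -/
noncomputable def cWit (α : Lint) (β : PropForm) : ℕ → Bool :=
  if h : SatP (.and (.neg β) (conjPos φ w α)) then h.choose else cY0 φ w α

/-- The output patterns for antecedent `α`. -/
noncomputable def cPats (α : Lint) : List (List Bool) :=
  truncN (φ.maxAtom + 1) (cY0 φ w α) ::
    ((consOf φ α).filter fun β => !(w α β)).map
      (fun β => truncN (φ.maxAtom + 1) (cWit φ w α β))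

open Classical in
/-- The signature-indexed output table. -/
noncomputable def cOuts : List (Option Bool) → List (List Bool) :=
  fun sig =>
    match (φ.condPairs.map Prod.fst).find?
        (fun α => decide (mSg α.itv (φ.maxAtom + 1) = sig)) with
    | some α => cPats φ w α
    | none => []

lemma maxAtom_lt_of_mem {α : Lint} (hα : α ∈ φ.condPairs.map Prod.fst) :
    α.maxAtom < φ.maxAtom + 1 := by
  obtain ⟨⟨α', β⟩, hm, rfl⟩ := List.mem_map.1 hα
  exact Nat.lt_succ_of_le (mem_condPairs_maxAtom hm).1

lemma cOuts_sig {α : Lint} (hα : α ∈ φ.condPairs.map Prod.fst) :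
    cOuts φ w (mSg α.itv (φ.maxAtom + 1)) = cPats φ w α := by
  set N := φ.maxAtom + 1 with hN
  have hsome : ((φ.condPairs.map Prod.fst).find?
      (fun α' => decide (mSg α'.itv N = mSg α.itv N))).isSome := by
    rw [List.find?_isSome]
    exact ⟨α, hα, by simp⟩
  obtain ⟨α', hf⟩ := Option.isSome_iff_exists.1 hsome
  have hα'mem := List.mem_of_find?_eq_some hf
  have hpred := List.find?_some hf
  simp only [decide_eq_true_eq] at hpred
  have : α' = α := mSg_inj (maxAtom_lt_of_mem φ hα'mem) (maxAtom_lt_of_mem φ hα) hpred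
  subst this
  simp only [cOuts]
  rw [hf]

variable {φ w}

lemma cY0_spec {α : Lint} (h : SatP (conjPos φ w α)) :
    (conjPos φ w α).eval (cY0 φ w α) = true := by
  rw [cY0, dif_pos h]
  exact h.choose_spec

lemma cWit_spec {α : Lint} {β : PropForm}
    (h : SatP (.and (.neg β) (conjPos φ w α))) :
    β.eval (cWit φ w α β) = false ∧ (conjPos φ w α).eval (cWit φ w α β) = true := by
  rw [cWit, dif_pos h]
  have hs : (!(β.eval (Exists.choose h)) &&
      (conjPos φ w α).eval (Exists.choose h)) = true := h.choose_spec
  constructor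
  · cases hb : β.eval (Exists.choose h)
    · rfl
    · rw [hb] at hs; simp at hs
  · cases hc : (conjPos φ w α).eval (Exists.choose h)
    · rw [hc] at hs; simp at hs
    · rfl

lemma eval_of_conjPos {α : Lint} {z : ℕ → Bool}
    (h : (conjPos φ w α).eval z = true) :
    α.toProp.eval z = true ∧
      ∀ β ∈ consOf φ α, w α β = true → β.eval z = true := by
  rw [conjPos, eval_foldr_and] at h
  refine ⟨h.1, fun β hβ hw => h.2 β ?_⟩
  exact List.mem_filter.2 ⟨hβ, hw⟩

/-- Evaluation of a bounded formula at a final tape equals evaluation at the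
underlying valuation. -/
lemma eval_mFin {α : Lint} {β : PropForm} {z : ℕ → Bool} {x : ℕ → Bool} {N : ℕ}
    (hβ : β.maxAtom < N) (hz : α.toProp.eval z = true) :
    β.eval (mFin N α.itv x (truncN N z)) = β.eval z := by
  apply eval_congr
  intro m hm
  have hmN : m < N := by omega
  rcases hitv : α.itv m with _ | b
  · rw [mFin_in N α.itv x hmN hitv, truncN_getD hmN]
  · rw [mFin_out N α.itv x (by rintro ⟨-, h⟩; rw [hitv] at h; exact nomatch h),
      initTape_of_itv_some hitv]
    exact ((eval_toProp α z).1 hz _ (itv_eq_some_iff.1 hitv)).symm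

/-- The bridge between the machine outputs and the propositional valuation `w`. -/
lemma cond_bridge (hcoh : Coh φ w) {x : ℕ → Bool} {α : Lint} {β : PropForm}
    (hmem : (α, β) ∈ φ.condPairs) :
    (∀ y ∈ Outputs (mkMachine (φ.maxAtom + 1) (cOuts φ w)) α.itv x,
      β.eval y = true) ↔ w α β = true := by
  set N := φ.maxAtom + 1 with hNdef
  have hN : 0 < N := Nat.succ_pos _
  have hαm : α ∈ φ.condPairs.map Prod.fst := List.mem_map.2 ⟨(α, β), hmem, rfl⟩
  have houts : cOuts φ w (mSg α.itv N) = cPats φ w α := cOuts_sig φ w hαm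
  have hcohα := hcoh α hαm
  have hβcons : β ∈ consOf φ α := mem_consOf.2 hmem
  have hβmax : β.maxAtom < N := Nat.lt_succ_of_le (mem_condPairs_maxAtom hmem).2
  rw [outputs_char hN]
  constructor
  · -- contrapositive: if w α β = false, exhibit a violating output
    intro hall
    by_contra hw
    have hwf : w α β = false := by revert hw; cases (w α β) <;> simp
    have hsat : SatP (.and (.neg β) (conjPos φ w α)) := hcohα.2 β hβcons hwf
    have hwit := cWit_spec hsat
    have hpat : truncN N (cWit φ w α β) ∈ cPats φ w α := by
      rw [cPats]
      exact List.mem_cons_of_mem _ (List.mem_map.2 ⟨β,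
        List.mem_filter.2 ⟨hβcons, by rw [hwf]; rfl⟩, rfl⟩)
    have hy : mFin N α.itv x (truncN N (cWit φ w α β)) ∈
        {y | (cOuts φ w (mSg α.itv N) = [] ∧ y = mTog α.itv x N) ∨
          ∃ pat ∈ cOuts φ w (mSg α.itv N), y = mFin N α.itv x pat} := by
      right
      exact ⟨_, by rw [houts]; exact hpat, rfl⟩
    have := hall _ hy
    rw [eval_mFin hβmax (eval_of_conjPos hwit.2).1] at this
    rw [hwit.1] at this
    exact Bool.false_ne_true this
  · -- if w α β = true, every output satisfies β
    intro hw y hy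
    rcases hy with ⟨hnil, -⟩ | ⟨pat, hpat, rfl⟩
    · rw [houts] at hnil
      exact absurd hnil (by simp [cPats])
    · rw [houts] at hpat
      rw [cPats] at hpat
      rcases List.mem_cons.1 hpat with rfl | hpat
      · have h0 := cY0_spec hcohα.1
        rw [eval_mFin hβmax (eval_of_conjPos h0).1]
        exact (eval_of_conjPos h0).2 β hβcons hw
      · obtain ⟨β', hβ', rfl⟩ := List.mem_map.1 hpat
        obtain ⟨hβ'cons, hβ'w⟩ := List.mem_filter.1 hβ'
        have hβ'f : w α β' = false := by
          revert hβ'w; cases (w α β') <;> simp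
        have hsat : SatP (.and (.neg β') (conjPos φ w α)) :=
          hcohα.2 β' hβ'cons hβ'f
        have hwit := cWit_spec hsat
        rw [eval_mFin hβmax (eval_of_conjPos hwit.2).1]
        exact (eval_of_conjPos hwit.2).2 β hβcons hw

/-- The generic truth lemma relating `SatGen` and propositional evaluation. -/
lemma satgen_iff_evalA {O : Lint → Set (ℕ → Bool)} {xm : ℕ → Bool}
    {v : ℕ → Bool} {w : Lint → PropForm → Bool} {φ : LForm}
    (hatom : ∀ i ≤ φ.maxAtom, xm i = v i)
    (hcond : ∀ p ∈ φ.condPairs,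
      ((∀ y ∈ O p.1, p.2.eval y = true) ↔ w p.1 p.2 = true)) :
    ∀ ψ : LForm, ψ.condPairs ⊆ φ.condPairs → ψ.maxAtom ≤ φ.maxAtom →
      (SatGen O xm ψ ↔ ψ.evalA v w = true) := by
  intro ψ
  induction ψ with
  | atom i =>
      intro _ hmax
      show (xm i = true) ↔ (v i = true)
      rw [hatom i hmax]
  | cond α β =>
      intro hsub _
      exact hcond (α, β) (hsub (by simp [LForm.condPairs]))
  | neg ψ ih =>
      intro hsub hmax
      show (¬ SatGen O xm ψ) ↔ _
      rw [ih hsub hmax]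
      simp [LForm.evalA]
  | and ψ₁ ψ₂ ih₁ ih₂ =>
      intro hsub hmax
      show (SatGen O xm ψ₁ ∧ SatGen O xm ψ₂) ↔ _
      rw [ih₁ (fun p hp => hsub (List.mem_append.2 (Or.inl hp)))
          (le_trans (le_max_left _ _) hmax),
        ih₂ (fun p hp => hsub (List.mem_append.2 (Or.inr hp)))
          (le_trans (le_max_right _ _) hmax)]
      simp [LForm.evalA]
  | or ψ₁ ψ₂ ih₁ ih₂ =>
      intro hsub hmax
      show (SatGen O xm ψ₁ ∨ SatGen O xm ψ₂) ↔ _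
      rw [ih₁ (fun p hp => hsub (List.mem_append.2 (Or.inl hp)))
          (le_trans (le_max_left _ _) hmax),
        ih₂ (fun p hp => hsub (List.mem_append.2 (Or.inr hp)))
          (le_trans (le_max_right _ _) hmax)]
      simp [LForm.evalA]

/-- Every `AX↓`-consistent formula has a model in `M↓`. -/
lemma model_existence {φ : LForm} (h : ¬ AXhalt (.neg φ)) :
    ∃ M : CSM, inMhalt M ∧ M.Sat φ := by
  obtain ⟨v, w, hval, hcoh⟩ := exists_coherent h
  set N := φ.maxAtom + 1 with hNdef
  have hN : 0 < N := Nat.succ_pos _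
  set xm : ℕ → Bool := fun i => if i < N then v i else false with hxm
  have hfin : FinSupp xm := by
    apply Set.Finite.subset (Set.finite_Iio N)
    intro i hi
    simp only [Set.mem_setOf_eq, hxm] at hi
    by_contra hlt
    simp only [Set.mem_Iio, not_lt] at hlt
    rw [if_neg (by omega)] at hi
    exact Bool.false_ne_true hi
  refine ⟨⟨mkMachine N (cOuts φ w), xm, hfin⟩, ?_, ?_⟩
  · intro α x' _
    exact outputs_nonempty hN
  · show SatGen (fun α => Outputs (mkMachine N (cOuts φ w)) α.itv xm) xm φ
    rw [satgen_iff_evalA (v := v) (w := w) ?_ ?_ φ (fun _ hp => hp) (le_refl _)]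
    · exact hval
    · intro i hi
      simp only [hxm]
      rw [if_pos (by omega)]
    · rintro ⟨α, β⟩ hp
      exact cond_bridge hcoh hp

end Model

end CausalSim
namespace CausalSim

lemma taut_dne (φ : LForm) : Tautology ((LForm.neg (.neg φ)).imp φ) := by
  intro v w
  simp only [LForm.imp, LForm.evalA]
  cases (φ.evalA v w) <;> rfl

/-- Completeness of `AX↓` for the class `M↓`: every `L`-formula
true in every model whose machine has at least one halting execution on every
input tape under every intervention is a theorem of `AX↓`; equivalently, every
`AX↓`-consistent formula is satisfied by some model in `M↓`. -/
theorem AXhalt_complete :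
    (∀ φ : LForm, (∀ M : CSM, inMhalt M → M.Sat φ) → AXhalt φ) ∧
    (∀ φ : LForm, ¬ AXhalt (.neg φ) → ∃ M : CSM, inMhalt M ∧ M.Sat φ) := by
  constructor
  · intro φ hvalid
    by_contra hnd
    have h2 : ¬ AXhalt (.neg (.neg φ)) := fun hd =>
      hnd (Deriv.mp (Deriv.taut (taut_dne φ)) hd)
    obtain ⟨M, hM, hsat⟩ := model_existence h2
    exact hsat (hvalid M hM)
  · intro φ h
    exact model_existence h

end CausalSim
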